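/- For all integers a, b and every natural number n, the identity 2a²·M^{a,b}_n = (4a² − b²)·T^{a,b}_n + 2b·T^{a,b}_{n+1} − T^{a,b}_{n+2} holds in ℤ. (In particular, for a = b = 1: 2M_n = 3T_n + 2T_{n+1} − T_{n+2}.) -/
import Mathlib

open Polynomial

/-- The generalized central trinomial coefficient `T^{a,b}_n`:
the coefficient of `X^n` in `(a + bX + aX^2)^n`. -/
noncomputable def genTrinomial (a b : ℤ) (n : ℕ) : ℤ :=
  ((C a + C b * X + C a * X ^ 2) ^ n).coeff n

/-- The generalized Motzkin number `M^{a,b}_n`: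
the coefficient of `X^n` in `(a + bX + aX^2)^n * (1 - X^2)`. -/
noncomputable def genMotzkin (a b : ℤ) (n : ℕ) : ℤ :=
  (((C a + C b * X + C a * X ^ 2) ^ n) * (1 - X ^ 2)).coeff n

private lemma natDegree_P_le (a b : ℤ) : (C a + C b * X + C a * X ^ 2).natDegree ≤ 2 := by
  compute_degree

private lemma reflect_P (a b : ℤ) :
    reflect 2 (C a + C b * X + C a * X ^ 2) = C a + C b * X + C a * X ^ 2 := by
  have h0 : (C a + C b * X + C a * X ^ 2 : ℤ[X]) = C a * X ^ 0 + C b * X ^ 1 + C a * X ^ 2 := by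
    ring
  rw [h0, reflect_add, reflect_add, reflect_C_mul_X_pow, reflect_C_mul_X_pow,
    reflect_C_mul_X_pow]
  norm_num [revAt_le]
  ring

private lemma reflect_Pn (a b : ℤ) (n : ℕ) :
    reflect (2 * n) ((C a + C b * X + C a * X ^ 2) ^ n) =
      (C a + C b * X + C a * X ^ 2) ^ n := by
  induction n with
  | zero => simp
  | succ n ih =>
    have hd : ((C a + C b * X + C a * X ^ 2) ^ n).natDegree ≤ 2 * n :=
      (natDegree_pow_le).trans (by nlinarith [natDegree_P_le a b])
    rw [pow_succ, mul_add 2 n 1, mul_one, reflect_mul _ _ hd (natDegree_P_le a b), ih,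
      reflect_P, pow_succ]

private lemma natDegree_Pn_le (a b : ℤ) (n : ℕ) :
    ((C a + C b * X + C a * X ^ 2) ^ n).natDegree ≤ 2 * n :=
  (natDegree_pow_le).trans (by nlinarith [natDegree_P_le a b])

/-- key coefficient-flip lemma -/
private lemma key (a b c : ℤ) (n j m : ℕ) (hm : m ≤ j + 2 * n) :
    (X ^ j * (C c * (C a + C b * X + C a * X ^ 2) ^ n)).coeff m =
      c * ((C a + C b * X + C a * X ^ 2) ^ n).coeff (j + 2 * n - m) := by
  set Q := (C a + C b * X + C a * X ^ 2) ^ n with hQ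
  have h1 : reflect (j + 2 * n) (X ^ j * (C c * Q)) = C c * Q := by
    rw [reflect_mul _ _ (natDegree_X_pow_le j)
      ((natDegree_C_mul_le c Q).trans (natDegree_Pn_le a b n)),
      reflect_monomial, revAt_le (le_refl j), Nat.sub_self, pow_zero, one_mul,
      reflect_C_mul, reflect_Pn]
  have h2 := congrArg (fun p => p.coeff (revAt (j + 2 * n) m)) h1
  simp only [coeff_reflect, revAt_invol] at h2
  rw [h2, coeff_C_mul, revAt_le hm]

private lemma coeff_X_pow_mul' (p : ℤ[X]) (j d : ℕ) :
    (X ^ j * p).coeff (d + j) = p.coeff d := by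
  rw [coeff_X_pow_mul]

theorem stmt0 (a b : ℤ) (n : ℕ) :
    2 * a ^ 2 * genMotzkin a b n =
      (4 * a ^ 2 - b ^ 2) * genTrinomial a b n + 2 * b * genTrinomial a b (n + 1)
        - genTrinomial a b (n + 2) := by
  unfold genMotzkin genTrinomial
  set P : ℤ[X] := C a + C b * X + C a * X ^ 2 with hP
  set Q : ℤ[X] := P ^ n with hQdef
  -- Motzkin
  have hM : (Q * (1 - X ^ 2)).coeff n = Q.coeff n - Q.coeff (n + 2) := by
    have h2 : (Q * X ^ 2).coeff n = Q.coeff (n + 2) := by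
      rw [mul_comm, ← one_mul Q, ← C_1, key a b 1 n 2 n (by omega), one_mul,
        show 2 + 2 * n - n = n + 2 by omega, C_1, one_mul]
    rw [mul_one_sub, coeff_sub, h2]
  -- T(n+1)
  have hT1 : (P ^ (n + 1)).coeff (n + 1) = 2 * a * Q.coeff (n + 1) + b * Q.coeff n := by
    have hexp : P ^ (n + 1) = C a * Q + X ^ 1 * (C b * Q) + X ^ 2 * (C a * Q) := by
      rw [pow_succ, hP]; ring
    rw [hexp, coeff_add, coeff_add, coeff_C_mul,
      key a b b n 1 (n + 1) (by omega), key a b a n 2 (n + 1) (by omega)]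
    have e1 : 1 + 2 * n - (n + 1) = n := by omega
    have e2 : 2 + 2 * n - (n + 1) = n + 1 := by omega
    rw [e1, e2]; ring
  -- T(n+2)
  have hT2 : (P ^ (n + 2)).coeff (n + 2) =
      2 * a ^ 2 * Q.coeff (n + 2) + 4 * (a * b) * Q.coeff (n + 1)
        + (2 * a ^ 2 + b ^ 2) * Q.coeff n := by
    have hexp : P ^ (n + 2) = C (a ^ 2) * Q + X ^ 1 * (C (2 * a * b) * Q)
        + X ^ 2 * (C (2 * a ^ 2 + b ^ 2) * Q) + X ^ 3 * (C (2 * a * b) * Q)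
        + X ^ 4 * (C (a ^ 2) * Q) := by
      rw [pow_add, hP]
      simp only [C_add, C_mul, C_pow, map_ofNat]
      ring
    have hx1 : (X ^ 1 * (C (2 * a * b) * Q)).coeff (n + 2) = 2 * a * b * Q.coeff (n + 1) := by
      rw [pow_one, show n + 2 = n + 1 + 1 from rfl, coeff_X_mul, coeff_C_mul]
    rw [hexp, coeff_add, coeff_add, coeff_add, coeff_add, coeff_C_mul, hx1,
      key a b (2 * a ^ 2 + b ^ 2) n 2 (n + 2) (by omega),
      key a b (2 * a * b) n 3 (n + 2) (by omega),
      key a b (a ^ 2) n 4 (n + 2) (by omega),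
      show 2 + 2 * n - (n + 2) = n by omega,
      show 3 + 2 * n - (n + 2) = n + 1 by omega,
      show 4 + 2 * n - (n + 2) = n + 2 by omega]
    ring
  rw [hM, hT1, hT2]
  ring
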